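/- Let n ≥ 2 and let L : [0,T] → ℝ^{n×n} be a C³ family of Minkowski-symmetric matrices with L(0) = id, L′(0) = 0, and L″(0) = −(2/3) B₀, where B₀ ∈ ℝ^{n×n} is null negative-definite. Then there exists δ > 0 such that −L(t) is null negative-definite for all t ∈ (0,δ); equivalently, ⟨L(t)v, v⟩ > 0 for every t ∈ (0,δ) and every nonzero null vector v ∈ ℝⁿ. -/

import Mathlib

open Matrix Set

noncomputable section

/-- The Minkowski inner product on `ℝⁿ`: `⟨v,w⟩ = -v₀w₀ + Σ_{j≥1} vⱼwⱼ`. -/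
def mink {n : ℕ} (v w : Fin n → ℝ) : ℝ :=
  ∑ j : Fin n, (if (j : ℕ) = 0 then -(v j * w j) else v j * w j)

/-- A vector is null if its Minkowski square vanishes. -/
def IsNull {n : ℕ} (v : Fin n → ℝ) : Prop := mink v v = 0

/-- A matrix is symmetric with respect to the Minkowski inner product. -/
def MinkSymm {n : ℕ} (L : Matrix (Fin n) (Fin n) ℝ) : Prop :=
  ∀ v w : Fin n → ℝ, mink (L.mulVec v) w = mink v (L.mulVec w)

/-- A matrix is null negative-definite: `⟨Lv,v⟩ < 0` for all nonzero null `v`. -/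
def NullNegDef {n : ℕ} (L : Matrix (Fin n) (Fin n) ℝ) : Prop :=
  ∀ v : Fin n → ℝ, v ≠ 0 → IsNull v → mink (L.mulVec v) v < 0

/-- A matrix is null negative semi-definite: `⟨Lv,v⟩ ≤ 0` for all null `v`. -/
def NullNegSemi {n : ℕ} (L : Matrix (Fin n) (Fin n) ℝ) : Prop :=
  ∀ v : Fin n → ℝ, IsNull v → mink (L.mulVec v) v ≤ 0

/-- Entrywise derivative (within a set) of a matrix-valued function of a real variable. -/
def matDerivWithin {n : ℕ} (L : ℝ → Matrix (Fin n) (Fin n) ℝ) (s : Set ℝ) (t : ℝ) :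
    Matrix (Fin n) (Fin n) ℝ :=
  Matrix.of fun i j => derivWithin (fun u => L u i j) s t

/-! ### Auxiliary lemmas -/

lemma mink_eq {n : ℕ} (v w : Fin n → ℝ) :
    mink v w = ∑ i : Fin n, (if (i : ℕ) = 0 then (-1 : ℝ) else 1) * (v i * w i) := by
  unfold mink
  refine Finset.sum_congr rfl fun i _ => ?_
  split <;> ring

lemma mink_add_left {n : ℕ} (v v' w : Fin n → ℝ) :
    mink (v + v') w = mink v w + mink v' w := by
  simp only [mink_eq, Pi.add_apply, ← Finset.sum_add_distrib]
  exact Finset.sum_congr rfl fun i _ => by ring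

lemma mink_smul_left {n : ℕ} (c : ℝ) (v w : Fin n → ℝ) :
    mink (c • v) w = c * mink v w := by
  simp only [mink_eq, Pi.smul_apply, smul_eq_mul, Finset.mul_sum]
  exact Finset.sum_congr rfl fun i _ => by ring

lemma mink_smul_right {n : ℕ} (c : ℝ) (v w : Fin n → ℝ) :
    mink v (c • w) = c * mink v w := by
  simp only [mink_eq, Pi.smul_apply, smul_eq_mul, Finset.mul_sum]
  exact Finset.sum_congr rfl fun i _ => by ring

lemma mink_abs_le {n : ℕ} (A : Matrix (Fin n) (Fin n) ℝ) (w : Fin n → ℝ)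
    (hw : ∀ i, |w i| ≤ 1) (c : ℝ) (hA : ∀ i j, |A i j| ≤ c) :
    |mink (A.mulVec w) w| ≤ (n : ℝ)^2 * c := by
  rw [mink_eq]
  calc |∑ i : Fin n, (if (i : ℕ) = 0 then (-1 : ℝ) else 1) * (A.mulVec w i * w i)|
      ≤ ∑ i : Fin n, |(if (i : ℕ) = 0 then (-1 : ℝ) else 1) * (A.mulVec w i * w i)| :=
        Finset.abs_sum_le_sum_abs _ _
    _ ≤ ∑ _i : Fin n, (n : ℝ) * c := by
        refine Finset.sum_le_sum fun i _ => ?_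
        have h1 : |(if (i : ℕ) = 0 then (-1 : ℝ) else 1)| = 1 := by split <;> simp
        rw [abs_mul, h1, one_mul, abs_mul]
        have h2 : |A.mulVec w i| ≤ (n : ℝ) * c := by
          unfold Matrix.mulVec dotProduct
          calc |∑ j : Fin n, A i j * w j| ≤ ∑ j : Fin n, |A i j * w j| :=
                Finset.abs_sum_le_sum_abs _ _
            _ ≤ ∑ _j : Fin n, c := by
                refine Finset.sum_le_sum fun j _ => ?_
                rw [abs_mul]
                calc |A i j| * |w j| ≤ |A i j| * 1 :=
                      mul_le_mul_of_nonneg_left (hw j) (abs_nonneg _)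
                  _ ≤ c := by rw [mul_one]; exact hA i j
            _ = (n : ℝ) * c := by simp [mul_comm]
        calc |A.mulVec w i| * |w i| ≤ |A.mulVec w i| * 1 :=
              mul_le_mul_of_nonneg_left (hw i) (abs_nonneg _)
          _ ≤ (n : ℝ) * c := by rw [mul_one]; exact h2
    _ = (n : ℝ)^2 * c := by
        simp [Finset.sum_const]
        ring

lemma Q_add {n : ℕ} (A B : Matrix (Fin n) (Fin n) ℝ) (w : Fin n → ℝ) :
    mink ((A + B).mulVec w) w = mink (A.mulVec w) w + mink (B.mulVec w) w := by
  rw [Matrix.add_mulVec, mink_add_left]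

lemma Q_smul {n : ℕ} (c : ℝ) (A : Matrix (Fin n) (Fin n) ℝ) (w : Fin n → ℝ) :
    mink ((c • A).mulVec w) w = c * mink (A.mulVec w) w := by
  rw [Matrix.smul_mulVec, mink_smul_left]

lemma Q_cont {n : ℕ} (A : Matrix (Fin n) (Fin n) ℝ) :
    Continuous (fun v : Fin n → ℝ => mink (A.mulVec v) v) := by
  simp only [mink_eq]
  apply continuous_finset_sum
  intro i _
  apply Continuous.mul continuous_const
  apply Continuous.mul
  · unfold Matrix.mulVec dotProduct
    exact continuous_finset_sum _ fun j _ =>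
      Continuous.mul continuous_const (continuous_apply j)
  · exact continuous_apply i

def eusq {n : ℕ} (v : Fin n → ℝ) : ℝ := ∑ i : Fin n, (v i)^2

lemma eusq_cont {n : ℕ} : Continuous (eusq (n := n)) :=
  continuous_finset_sum _ fun i _ => (continuous_apply i).pow 2

lemma eusq_smul {n : ℕ} (a : ℝ) (v : Fin n → ℝ) : eusq (a • v) = a^2 * eusq v := by
  simp only [eusq, Pi.smul_apply, smul_eq_mul, Finset.mul_sum]
  exact Finset.sum_congr rfl fun i _ => by ring

lemma eusq_pos {n : ℕ} {v : Fin n → ℝ} (hv : v ≠ 0) : 0 < eusq v := by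
  obtain ⟨i, hi⟩ := Function.ne_iff.mp hv
  have h1 : 0 < (v i)^2 := by
    have h0 := abs_pos.mpr hi
    nlinarith [h0, sq_abs (v i)]
  calc (0:ℝ) < (v i)^2 := h1
    _ ≤ eusq v := Finset.single_le_sum (f := fun j => (v j)^2)
        (fun j _ => sq_nonneg _) (Finset.mem_univ i)

lemma mink_cont {n : ℕ} : Continuous (fun v : Fin n → ℝ => mink v v) := by
  apply continuous_finset_sum
  intro i _
  have : Continuous fun v : Fin n → ℝ => v i * v i :=
    (continuous_apply i).mul (continuous_apply i)
  by_cases h : (i : ℕ) = 0 <;> simp [h] <;> fun_prop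

def KK (n : ℕ) : Set (Fin n → ℝ) := {v | IsNull v ∧ eusq v = 1}

lemma KK_abs_le {n : ℕ} {w : Fin n → ℝ} (hw : w ∈ KK n) (i : Fin n) : |w i| ≤ 1 := by
  rw [← Real.sqrt_one, ← hw.2,
    show |w i| = Real.sqrt ((w i)^2) by rw [Real.sqrt_sq_eq_abs]]
  apply Real.sqrt_le_sqrt
  exact Finset.single_le_sum (f := fun j => (w j)^2) (fun j _ => sq_nonneg _)
    (Finset.mem_univ i)

lemma KK_ne_zero {n : ℕ} {w : Fin n → ℝ} (hw : w ∈ KK n) : w ≠ 0 := by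
  intro h
  have h0 : eusq w = 0 := by simp [h, eusq]
  have h2 := hw.2
  rw [h0] at h2
  exact zero_ne_one h2

lemma KK_compact (n : ℕ) : IsCompact (KK n) := by
  have hclosed : IsClosed (KK n) := by
    have h1 : IsClosed {v : Fin n → ℝ | IsNull v} :=
      (isClosed_singleton (x := (0:ℝ))).preimage mink_cont
    have h2 : IsClosed {v : Fin n → ℝ | eusq v = 1} :=
      (isClosed_singleton (x := (1:ℝ))).preimage eusq_cont
    exact h1.inter h2
  have hbdd : Bornology.IsBounded (KK n) := by
    apply (Metric.isBounded_closedBall (x := (0 : Fin n → ℝ)) (r := 1)).subset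
    intro v hv
    rw [Metric.mem_closedBall, dist_zero_right]
    apply pi_norm_le_iff_of_nonneg zero_le_one |>.2
    intro i
    rw [Real.norm_eq_abs]
    exact KK_abs_le hv i
  exact Metric.isCompact_of_isClosed_isBounded hclosed hbdd

lemma KK_nonempty {n : ℕ} (hn : 2 ≤ n) : (KK n).Nonempty := by
  have h0 : (0:ℕ) < n := by omega
  have h1 : (1:ℕ) < n := by omega
  set i0 : Fin n := ⟨0, h0⟩
  set i1 : Fin n := ⟨1, h1⟩
  set c : ℝ := (Real.sqrt 2)⁻¹
  refine ⟨fun i => if (i:ℕ) ≤ 1 then c else 0, ?_, ?_⟩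
  · unfold IsNull mink
    rw [Finset.sum_eq_add_of_mem i0 i1 (Finset.mem_univ _) (Finset.mem_univ _)
      (by simp [i0, i1, Fin.ext_iff]) ?_]
    · simp [i0, i1]
    · intro k _ hk
      have : ¬ ((k:ℕ) ≤ 1) := by
        rcases hk with ⟨ha, hb⟩
        intro hle
        have h01 : (k:ℕ) = 0 ∨ (k:ℕ) = 1 := by omega
        rcases h01 with h | h
        · exact ha (Fin.ext h)
        · exact hb (Fin.ext h)
      simp [this]
  · unfold eusq
    rw [Finset.sum_eq_add_of_mem i0 i1 (Finset.mem_univ _) (Finset.mem_univ _)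
      (by simp [i0, i1, Fin.ext_iff]) ?_]
    · have : c^2 = 1/2 := by
        rw [inv_pow, Real.sq_sqrt (by norm_num)]; norm_num
      simp [i0, i1, this]
      norm_num
    · intro k _ hk
      have : ¬ ((k:ℕ) ≤ 1) := by
        rcases hk with ⟨ha, hb⟩
        intro hle
        have h01 : (k:ℕ) = 0 ∨ (k:ℕ) = 1 := by omega
        rcases h01 with h | h
        · exact ha (Fin.ext h)
        · exact hb (Fin.ext h)
      simp [this]

lemma myIteratedDerivWithin_congr_set {f : ℝ → ℝ} {s t : Set ℝ} {x : ℝ} (h : s =ᶠ[nhds x] t)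
    (m : ℕ) : iteratedDerivWithin m f s x = iteratedDerivWithin m f t x := by
  rw [iteratedDerivWithin, iteratedDerivWithin, iteratedFDerivWithin_congr_set h m]

lemma icc_eventuallyEq {t T ξ : ℝ} (hξ : ξ < t) (htT : t ≤ T) :
    Icc (0:ℝ) t =ᶠ[nhds ξ] Icc 0 T := by
  rw [Filter.eventuallyEq_set]
  filter_upwards [Iio_mem_nhds hξ] with u hu
  simp only [mem_Icc]
  constructor
  · rintro ⟨ha, _⟩; exact ⟨ha, (le_of_lt hu).trans htT⟩
  · rintro ⟨ha, _⟩; exact ⟨ha, le_of_lt hu⟩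

lemma taylor_entry {T : ℝ} (g : ℝ → ℝ) (hg : ContDiffOn ℝ 3 g (Icc 0 T))
    {t : ℝ} (ht : 0 < t) (htT : t ≤ T) :
    ∃ ξ ∈ Ioo 0 t, g t = g 0 + derivWithin g (Icc 0 T) 0 * t
      + iteratedDerivWithin 2 g (Icc 0 T) ξ * t ^ 2 / 2 := by
  have hsub : Icc (0:ℝ) t ⊆ Icc 0 T := Icc_subset_Icc le_rfl htT
  have hud : UniqueDiffOn ℝ (Icc (0:ℝ) t) := uniqueDiffOn_Icc ht
  have hg2 : ContDiffOn ℝ 2 g (Icc 0 t) := (hg.of_le (by norm_num)).mono hsub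
  have hg1 : ContDiffOn ℝ 1 g (Icc 0 t) := hg2.of_le (by norm_num)
  have hdiff : DifferentiableOn ℝ (iteratedDerivWithin 1 g (Icc 0 t)) (Ioo 0 t) :=
    (hg2.differentiableOn_iteratedDerivWithin (by norm_num) hud).mono Ioo_subset_Icc_self
  obtain ⟨ξ, hξ, htay⟩ := taylor_mean_remainder_lagrange (n := 1) ht.ne
    (by rw [uIcc_of_le ht.le]; exact_mod_cast hg1)
    (by rwa [uIcc_of_le ht.le, uIoo_of_le ht.le])
  rw [uIoo_of_le ht.le] at hξ
  rw [uIcc_of_le ht.le] at htay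
  refine ⟨ξ, hξ, ?_⟩
  have h0mem : (0:ℝ) ∈ Icc (0:ℝ) t := ⟨le_rfl, ht.le⟩
  have hev0 : Icc (0:ℝ) t =ᶠ[nhds 0] Icc 0 T := icc_eventuallyEq ht htT
  have hevξ : Icc (0:ℝ) t =ᶠ[nhds ξ] Icc 0 T := icc_eventuallyEq hξ.2 htT
  have htp : taylorWithinEval g 1 (Icc 0 t) 0 t = g 0 + derivWithin g (Icc 0 T) 0 * t := by
    rw [taylorWithinEval_succ, taylor_within_zero_eval]
    rw [iteratedDerivWithin_one]
    rw [derivWithin_congr_set hev0]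
    simp
    ring
  rw [htp] at htay
  have h2 : iteratedDerivWithin 2 g (Icc 0 t) ξ = iteratedDerivWithin 2 g (Icc 0 T) ξ :=
    myIteratedDerivWithin_congr_set hevξ 2
  rw [h2] at htay
  have hfac : (((1+1 : ℕ).factorial : ℕ) : ℝ) = 2 := by norm_num [Nat.factorial]
  have hpow : (t - (0:ℝ)) ^ (1+1) = t ^ 2 := by ring
  rw [hpow, hfac] at htay
  linarith

def g2aux {n : ℕ} (L : ℝ → Matrix (Fin n) (Fin n) ℝ) (T : ℝ) (i j : Fin n) : ℝ → ℝ :=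
  iteratedDerivWithin 2 (fun u => L u i j) (Icc 0 T)

lemma iter2_eq_derivWithin_derivWithin {T : ℝ} (hT : 0 < T) (g : ℝ → ℝ) :
    iteratedDerivWithin 2 g (Icc 0 T) 0
      = derivWithin (fun u => derivWithin g (Icc 0 T) u) (Icc 0 T) 0 := by
  have hud : UniqueDiffOn ℝ (Icc (0:ℝ) T) := uniqueDiffOn_Icc hT
  have h0 : (0:ℝ) ∈ Icc (0:ℝ) T := ⟨le_rfl, hT.le⟩
  rw [iteratedDerivWithin_succ', iteratedDerivWithin_one]

/-- if a `C³` family of Minkowski-symmetric matrices satisfies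
`L(0) = id`, `L'(0) = 0`, `L''(0) = -(2/3) B₀` with `B₀` null negative-definite, then
`-L(t)` is null negative-definite for all sufficiently small `t > 0`. -/
theorem stmt_6 {n : ℕ} (hn : 2 ≤ n) (T : ℝ) (hT : 0 < T)
    (B₀ : Matrix (Fin n) (Fin n) ℝ) (hB₀ : NullNegDef B₀)
    (L : ℝ → Matrix (Fin n) (Fin n) ℝ)
    (hL : ∀ i j, ContDiffOn ℝ 3 (fun t => L t i j) (Set.Icc 0 T))
    (hLsymm : ∀ t ∈ Set.Icc (0 : ℝ) T, MinkSymm (L t))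
    (hL0 : L 0 = 1)
    (hL1 : matDerivWithin L (Set.Icc 0 T) 0 = 0)
    (hL2 : matDerivWithin (fun t => matDerivWithin L (Set.Icc 0 T) t) (Set.Icc 0 T) 0
      = -(2 / 3 : ℝ) • B₀) :
    ∃ δ > 0, δ ≤ T ∧ ∀ t, 0 < t → t < δ → ∀ v : Fin n → ℝ, v ≠ 0 → IsNull v →
      0 < mink ((L t).mulVec v) v := by
  have hud : UniqueDiffOn ℝ (Icc (0:ℝ) T) := uniqueDiffOn_Icc hT
  have h0mem : (0:ℝ) ∈ Icc (0:ℝ) T := ⟨le_rfl, hT.le⟩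
  set g2 : Fin n → Fin n → ℝ → ℝ := g2aux L T with hg2def
  -- first derivative entries vanish at 0
  have hL1e : ∀ i j, derivWithin (fun u => L u i j) (Icc 0 T) 0 = 0 := by
    intro i j
    have := congrFun (congrFun (congrArg (fun M : Matrix (Fin n) (Fin n) ℝ => (M : _)) hL1) i) j
    simpa [matDerivWithin] using this
  -- second derivative entries at 0
  have hL2e : ∀ i j, g2 i j 0 = -(2/3 : ℝ) * B₀ i j := by
    intro i j
    have h := congrFun (congrFun (congrArg (fun M : Matrix (Fin n) (Fin n) ℝ => (M : _)) hL2) i) j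
    show g2aux L T i j 0 = _
    unfold g2aux
    rw [iter2_eq_derivWithin_derivWithin hT]
    simpa [matDerivWithin] using h
  -- minimum of -⟨B₀ v, v⟩ on the compact set of normalized null vectors
  obtain ⟨v₀, hv₀K, hmax⟩ := (KK_compact n).exists_isMaxOn (KK_nonempty hn)
    ((Q_cont B₀).continuousOn)
  set m : ℝ := -(mink (B₀.mulVec v₀) v₀) with hmdef
  have hm : 0 < m := by
    have := hB₀ v₀ (KK_ne_zero hv₀K) hv₀K.1
    simp only [hmdef]
    linarith
  have hnpos : (0:ℝ) < (n:ℝ) := by exact_mod_cast (by omega : 0 < n)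
  have hn2pos : (0:ℝ) < (n:ℝ)^2 := by positivity
  set ε : ℝ := m / ((n:ℝ)^2 * 3) with hεdef
  have hε : 0 < ε := by positivity
  -- continuity of the second derivative at 0, within the interval
  have hcont : ∀ i j, ContinuousWithinAt (g2 i j) (Icc 0 T) 0 := fun i j =>
    ((hL i j).continuousOn_iteratedDerivWithin (by norm_num) hud) 0 h0mem
  have hev : ∀ᶠ s in nhdsWithin 0 (Icc (0:ℝ) T), ∀ i j, |g2 i j s - g2 i j 0| < ε := by
    rw [Filter.eventually_all]
    intro i
    rw [Filter.eventually_all]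
    intro j
    have h := Metric.tendsto_nhds.mp (hcont i j) ε hε
    filter_upwards [h] with s hs
    rwa [Real.dist_eq] at hs
  obtain ⟨r, hr, hrsub⟩ := Metric.mem_nhdsWithin_iff.mp hev
  refine ⟨min r T, lt_min hr hT, min_le_right _ _, ?_⟩
  intro t ht htδ v hv hnull
  have htr : t < r := lt_of_lt_of_le htδ (min_le_left _ _)
  have htT : t ≤ T := le_of_lt (lt_of_lt_of_le htδ (min_le_right _ _))
  -- entrywise Taylor estimate
  have hE : ∀ i j, |L t i j - (L 0 i j + (-(t^2/3)) * B₀ i j)| ≤ t^2/2 * ε := by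
    intro i j
    obtain ⟨ξ, hξ, heq⟩ := taylor_entry (fun u => L u i j) (hL i j) ht htT
    rw [hL1e i j] at heq
    have hξmem : ξ ∈ Metric.ball (0:ℝ) r ∩ Icc 0 T := by
      constructor
      · rw [Metric.mem_ball, Real.dist_eq, sub_zero, abs_of_pos hξ.1]
        exact hξ.2.trans htr
      · exact ⟨hξ.1.le, hξ.2.le.trans htT⟩
    have hclose := hrsub hξmem i j
    have hkey : L t i j - (L 0 i j + (-(t^2/3)) * B₀ i j)
        = (g2 i j ξ - g2 i j 0) * (t^2/2) := by
      rw [hL2e i j, heq]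
      show _ = (g2aux L T i j ξ - _) * _
      unfold g2aux
      ring
    rw [hkey, abs_mul, abs_of_nonneg (by positivity : (0:ℝ) ≤ t^2/2)]
    calc |g2 i j ξ - g2 i j 0| * (t^2/2) ≤ ε * (t^2/2) :=
          mul_le_mul_of_nonneg_right hclose.le (by positivity)
      _ = t^2/2 * ε := by ring
  -- main estimate on normalized null vectors
  have key : ∀ w ∈ KK n, 0 < mink ((L t).mulVec w) w := by
    intro w hw
    set Ee : Matrix (Fin n) (Fin n) ℝ :=
      Matrix.of fun i j => L t i j - (L 0 i j + (-(t^2/3)) * B₀ i j) with hEdef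
    have hdecomp : L t = (L 0 + (-(t^2/3)) • B₀) + Ee := by
      ext i j
      simp [hEdef, Matrix.add_apply, Matrix.smul_apply, smul_eq_mul]
    have hQ : mink ((L t).mulVec w) w
        = mink ((L 0).mulVec w) w + (-(t^2/3)) * mink (B₀.mulVec w) w
          + mink (Ee.mulVec w) w := by
      rw [hdecomp, Q_add, Q_add, Q_smul]
    have hQ0 : mink ((L 0).mulVec w) w = 0 := by
      rw [hL0, Matrix.one_mulVec]
      exact hw.1
    have hQB : mink (B₀.mulVec w) w ≤ -m := by
      have h := isMaxOn_iff.mp hmax w hw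
      simp only [hmdef, neg_neg]
      exact h
    have hQE : |mink (Ee.mulVec w) w| ≤ (n:ℝ)^2 * (t^2/2 * ε) := by
      apply mink_abs_le _ _ (fun i => KK_abs_le hw i) (t^2/2 * ε)
      intro i j
      simpa [hEdef] using hE i j
    have hεm : (n:ℝ)^2 * ε = m/3 := by
      rw [hεdef]
      field_simp
    have h2 : (n:ℝ)^2 * (t^2/2 * ε) = t^2 * m / 6 := by
      calc (n:ℝ)^2 * (t^2/2 * ε) = ((n:ℝ)^2 * ε) * (t^2/2) := by ring
        _ = (m/3) * (t^2/2) := by rw [hεm]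
        _ = t^2 * m / 6 := by ring
    have hQE' : -(t^2 * m / 6) ≤ mink (Ee.mulVec w) w := by
      have h1 := (abs_le.mp hQE).1
      linarith
    have ht2 : 0 < t^2 := by positivity
    rw [hQ, hQ0]
    have h3 : (t^2/3) * mink (B₀.mulVec w) w ≤ (t^2/3) * (-m) :=
      mul_le_mul_of_nonneg_left hQB (by positivity)
    have h4 : 0 < t^2 * m := mul_pos ht2 hm
    nlinarith [h3, hQE', h4]
  -- rescale a general nonzero null vector
  set c : ℝ := Real.sqrt (eusq v) with hcdef
  have heu : 0 < eusq v := eusq_pos hv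
  have hc : 0 < c := Real.sqrt_pos.mpr heu
  have hwK : c⁻¹ • v ∈ KK n := by
    constructor
    · unfold IsNull
      rw [mink_smul_left, mink_smul_right, hnull]
      ring
    · rw [eusq_smul, inv_pow, hcdef, Real.sq_sqrt heu.le,
        inv_mul_cancel₀ heu.ne']
  have hpos := key (c⁻¹ • v) hwK
  have hexp : mink ((L t).mulVec (c⁻¹ • v)) (c⁻¹ • v)
      = c⁻¹ * (c⁻¹ * mink ((L t).mulVec v) v) := by
    rw [Matrix.mulVec_smul, mink_smul_left, mink_smul_right]
  rw [hexp] at hpos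
  have h := mul_pos hc (mul_pos hc hpos)
  have heq : c * (c * (c⁻¹ * (c⁻¹ * mink ((L t).mulVec v) v)))
      = mink ((L t).mulVec v) v := by
    field_simp
  rwa [heq] at h
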